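/- With Γ(X) = sum_ω Π(ω|X) γ(ω) and γ a non-decreasing function of ω (in the coordinatewise order), it holds that Γ(X) ≥ Γ̃(W(X)), where Γ̃(w) denotes the expectation of γ under the product Bernoulli measure with all edge probabilities equal to p(w). Moreover w ↦ Γ̃(w) is non-increasing in w. -/
import Mathlib


open Finset

private lemma bern_step {ι : Type*} [Fintype ι] [DecidableEq ι] (g : (ι → Bool) → ℝ)
    (hg : Monotone g) (q1 q2 : ι → ℝ) (i0 : ι) (heq : ∀ i, i ≠ i0 → q1 i = q2 i)
    (hb : ∀ i, i ≠ i0 → q1 i ∈ Set.Icc (0:ℝ) 1) (hle : q1 i0 ≤ q2 i0) :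
    ∑ σ : ι → Bool, (∏ i, (if σ i then q1 i else 1 - q1 i)) * g σ ≤
    ∑ σ : ι → Bool, (∏ i, (if σ i then q2 i else 1 - q2 i)) * g σ := by
  classical
  set e := (Equiv.piSplitAt i0 (fun _ : ι => Bool)).symm with he
  have hsum : ∀ q : ι → ℝ,
      ∑ σ : ι → Bool, (∏ i, (if σ i then q i else 1 - q i)) * g σ
      = ∑ ρ : {j // j ≠ i0} → Bool,
          (q i0 * (∏ i ∈ univ.erase i0, (if e (true, ρ) i then q i else 1 - q i)) * g (e (true, ρ))
          + (1 - q i0) * (∏ i ∈ univ.erase i0, (if e (false, ρ) i then q i else 1 - q i)) * g (e (false, ρ))) := by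
    intro q
    rw [← Equiv.sum_comp e (fun σ => (∏ i, (if σ i then q i else 1 - q i)) * g σ),
        Fintype.sum_prod_type, Fintype.sum_bool, ← Finset.sum_add_distrib]
    refine Finset.sum_congr rfl fun ρ _ => ?_
    have ht : e (true, ρ) i0 = true := by simp [he, Equiv.piSplitAt]
    have hf : e (false, ρ) i0 = false := by simp [he, Equiv.piSplitAt]
    rw [← Finset.mul_prod_erase _ _ (Finset.mem_univ i0),
        ← Finset.mul_prod_erase _ (fun i => if e (false, ρ) i then q i else 1 - q i) (Finset.mem_univ i0),
        ht, hf]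
    simp [mul_assoc]
  rw [hsum q1, hsum q2]
  refine Finset.sum_le_sum fun ρ _ => ?_
  have hPeq : ∀ bv, (∏ i ∈ univ.erase i0, (if e (bv, ρ) i then q2 i else 1 - q2 i))
      = ∏ i ∈ univ.erase i0, (if e (bv, ρ) i then q1 i else 1 - q1 i) := by
    intro bv
    refine Finset.prod_congr rfl fun i hi => ?_
    rw [heq i (Finset.ne_of_mem_erase hi)]
  have hPP : (∏ i ∈ univ.erase i0, (if e (true, ρ) i then q1 i else 1 - q1 i))
      = ∏ i ∈ univ.erase i0, (if e (false, ρ) i then q1 i else 1 - q1 i) := by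
    refine Finset.prod_congr rfl fun i hi => ?_
    have hne := Finset.ne_of_mem_erase hi
    have hee : e (true, ρ) i = e (false, ρ) i := by
      simp [he, Equiv.piSplitAt, dif_neg hne]
    rw [hee]
  rw [hPeq true, hPeq false, hPP]
  set P := ∏ i ∈ univ.erase i0, (if e (false, ρ) i then q1 i else 1 - q1 i) with hPdef
  have hP0 : 0 ≤ P := by
    refine Finset.prod_nonneg fun i hi => ?_
    have hbi := hb i (Finset.ne_of_mem_erase hi)
    rcases hbi with ⟨h0, h1⟩
    split <;> linarith
  have hgle : g (e (false, ρ)) ≤ g (e (true, ρ)) := by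
    refine hg fun j => ?_
    by_cases hj : j = i0
    · subst hj
      simp [he, Equiv.piSplitAt]
    · have hee : e (false, ρ) j = e (true, ρ) j := by
        simp [he, Equiv.piSplitAt, dif_neg hj]
      rw [hee]
  nlinarith [mul_nonneg (mul_nonneg (sub_nonneg.2 hle) hP0) (sub_nonneg.2 hgle)]

private lemma bern_mono {ι : Type*} [Fintype ι] [DecidableEq ι] (g : (ι → Bool) → ℝ)
    (hg : Monotone g) (q q' : ι → ℝ)
    (hq : ∀ i, q i ∈ Set.Icc (0:ℝ) 1) (hq' : ∀ i, q' i ∈ Set.Icc (0:ℝ) 1)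
    (hle : ∀ i, q i ≤ q' i) :
    ∑ σ : ι → Bool, (∏ i, (if σ i then q i else 1 - q i)) * g σ ≤
    ∑ σ : ι → Bool, (∏ i, (if σ i then q' i else 1 - q' i)) * g σ := by
  classical
  have key : ∀ s : Finset ι,
      ∑ σ : ι → Bool, (∏ i, (if σ i then q i else 1 - q i)) * g σ ≤
      ∑ σ : ι → Bool, (∏ i, (if σ i then (if i ∈ s then q' i else q i)
        else 1 - (if i ∈ s then q' i else q i))) * g σ := by
    intro s
    induction s using Finset.induction_on with
    | empty => simp
    | @insert i0 s hi0 ih =>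
      refine ih.trans ?_
      refine bern_step g hg _ _ i0 (fun i hi => ?_) (fun i hi => ?_) ?_
      · simp [Finset.mem_insert, hi]
      · by_cases h : i ∈ s <;> simp [h, hq i, hq' i]
      · simp [hi0, hle i0]
  have := key Finset.univ
  simpa using this
  
private lemma bridge {V : Type*} [Fintype V] [DecidableEq V] (γ : (V → V → Bool) → ℝ)
    (hγ : Monotone γ) (q q' : V × V → ℝ)
    (hq : ∀ e, q e ∈ Set.Icc (0:ℝ) 1) (hq' : ∀ e, q' e ∈ Set.Icc (0:ℝ) 1)
    (hle : ∀ e, q e ≤ q' e) :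
    ∑ ω : V → V → Bool, (∏ e : V × V, (if ω e.1 e.2 then q e else 1 - q e)) * γ ω ≤
    ∑ ω : V → V → Bool, (∏ e : V × V, (if ω e.1 e.2 then q' e else 1 - q' e)) * γ ω := by
  classical
  have hre : ∀ r : V × V → ℝ,
      ∑ ω : V → V → Bool, (∏ e : V × V, (if ω e.1 e.2 then r e else 1 - r e)) * γ ω
      = ∑ σ : V × V → Bool, (∏ e : V × V, (if σ e then r e else 1 - r e)) * γ (Function.curry σ) := by
    intro r
    rw [← Equiv.sum_comp (Equiv.curry V V Bool)
      (fun ω => (∏ e : V × V, (if ω e.1 e.2 then r e else 1 - r e)) * γ ω)]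
    refine Finset.sum_congr rfl fun σ _ => ?_
    simp [Function.curry, Equiv.curry]
  rw [hre q, hre q']
  exact bern_mono _ (fun σ σ' h => hγ fun u v => h (u, v)) q q' hq hq' hle



/-- The oscillation `W(X) = max_{u,v} |X u - X v|`. -/
noncomputable def osc {V : Type*} [Fintype V] [Nonempty V] (X : V → ℝ) : ℝ :=
  Finset.univ.sup' Finset.univ_nonempty fun p : V × V => |X p.1 - X p.2|

/-- The product Bernoulli kernel `Π(ω | X)`. -/
noncomputable def PiK {V : Type*} [Fintype V] (p : ℝ → ℝ) (X : V → ℝ)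
    (ω : V → V → Bool) : ℝ :=
  ∏ e : V × V, (if ω e.1 e.2 then p |X e.1 - X e.2| else 1 - p |X e.1 - X e.2|)

/-- With `Γ(X) = ∑_ω Π(ω|X) γ(ω)` and `γ` non-decreasing with values in
`[0,1)`, one has `Γ(X) ≥ Γ̃(W(X))`, where `Γ̃(w)` is the mean of `γ` under the product
Bernoulli measure with all edge probabilities `p(w)`; moreover `Γ̃` is non-increasing on
`[0,1]`. -/
theorem stmt15 {V : Type*} [Fintype V] [DecidableEq V] [Nonempty V]
    (p : ℝ → ℝ) (hp : AntitoneOn p (Set.Icc 0 1)) (hp0 : p 0 = 1)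
    (hpr : ∀ x ∈ Set.Icc (0:ℝ) 1, p x ∈ Set.Icc (0:ℝ) 1)
    (γ : (V → V → Bool) → ℝ) (hγmono : Monotone γ) (hγr : ∀ ω, γ ω ∈ Set.Ico (0:ℝ) 1)
    (X : V → ℝ) (hX : ∀ v, X v ∈ Set.Icc (0:ℝ) 1) :
    (∑ ω : V → V → Bool,
        (∏ e : V × V, (if ω e.1 e.2 then p (osc X) else 1 - p (osc X))) * γ ω) ≤
      (∑ ω : V → V → Bool, PiK p X ω * γ ω) ∧
    AntitoneOn (fun w : ℝ => ∑ ω : V → V → Bool,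
        (∏ e : V × V, (if ω e.1 e.2 then p w else 1 - p w)) * γ ω) (Set.Icc 0 1) := by
  have habs : ∀ u v : V, |X u - X v| ∈ Set.Icc (0:ℝ) 1 := by
    intro u v
    obtain ⟨hu0, hu1⟩ := hX u
    obtain ⟨hv0, hv1⟩ := hX v
    constructor
    · exact abs_nonneg _
    · rw [abs_le]; constructor <;> linarith
  have hoscmem : osc X ∈ Set.Icc (0:ℝ) 1 := by
    constructor
    · obtain ⟨v⟩ := (inferInstance : Nonempty V)
      have := Finset.le_sup' (fun p : V × V => |X p.1 - X p.2|) (Finset.mem_univ (v, v))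
      simp at this
      calc (0:ℝ) = |X v - X v| := by simp
        _ ≤ osc X := Finset.le_sup' (fun p : V × V => |X p.1 - X p.2|) (Finset.mem_univ (v, v))
    · exact Finset.sup'_le _ _ fun e _ => (habs e.1 e.2).2
  have hle_osc : ∀ e : V × V, |X e.1 - X e.2| ≤ osc X := fun e =>
    Finset.le_sup' (fun p : V × V => |X p.1 - X p.2|) (Finset.mem_univ e)
  constructor
  · have := bridge γ hγmono (fun _ => p (osc X)) (fun e => p |X e.1 - X e.2|)
      (fun _ => hpr _ hoscmem) (fun e => hpr _ (habs e.1 e.2))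
      (fun e => hp (habs e.1 e.2) hoscmem (hle_osc e))
    simpa [PiK] using this
  · intro w1 h1 w2 h2 h12
    exact bridge γ hγmono (fun _ => p w2) (fun _ => p w1)
      (fun _ => hpr _ h2) (fun _ => hpr _ h1) (fun _ => hp h1 h2 h12)
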